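/- Every exceptional graph contains no cycle whose length is divisible by 3. -/

import Mathlib

open SimpleGraph
set_option maxHeartbeats 1600000

/-- `ExcAux G r x y`: `G` is an exceptional graph with root `r`, whose two degree-2
vertices other than `r` are `x` and `y`.  Exceptional graphs are built recursively
from `K_{2,3}` (the root `r` being one of its three degree-2 vertices):
* if `x` and `y` are non-adjacent, one may add a new path of length 3 joining them;
* if `x` and `y` are adjacent, one may add a new vertex whose neighbourhood is that
  of `x` (or of `y`), or a new 4-cycle `a b c d a` together with the edges `x a`
  and `c y`.
Newly added vertices are required to be fresh, i.e. isolated beforehand. -/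
inductive ExcAux {V : Type*} : SimpleGraph V → V → V → V → Prop
  | base (r x y a b : V) (hd : ([r, x, y, a, b] : List V).Pairwise (· ≠ ·)) :
      ExcAux (SimpleGraph.fromEdgeSet
        {s(r, a), s(r, b), s(x, a), s(x, b), s(y, a), s(y, b)}) r x y
  | symm (G : SimpleGraph V) (r x y : V) : ExcAux G r x y → ExcAux G r y x
  | addPath (H : SimpleGraph V) (r x y p q : V) :
      ExcAux H r x y → ¬ H.Adj x y → p ≠ q →
      H.neighborSet p = ∅ → H.neighborSet q = ∅ →
      ExcAux (H ⊔ SimpleGraph.fromEdgeSet {s(x, p), s(p, q), s(q, y)}) r p q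
  | addTwin (H : SimpleGraph V) (r x y w a : V) :
      ExcAux H r x y → H.Adj x y → H.neighborSet x = {y, a} →
      H.neighborSet w = ∅ →
      ExcAux (H ⊔ SimpleGraph.fromEdgeSet {s(w, y), s(w, a)}) r x w
  | addSquare (H : SimpleGraph V) (r x y a b c d : V) :
      ExcAux H r x y → H.Adj x y →
      ([a, b, c, d] : List V).Pairwise (· ≠ ·) →
      H.neighborSet a = ∅ → H.neighborSet b = ∅ →
      H.neighborSet c = ∅ → H.neighborSet d = ∅ →
      ExcAux (H ⊔ SimpleGraph.fromEdgeSet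
        {s(a, b), s(b, c), s(c, d), s(d, a), s(x, a), s(c, y)}) r b d

namespace ExcProof
variable {V : Type*}


variable {V : Type*}

lemma not_adj_left {H : SimpleGraph V} {p v : V} (h : H.neighborSet p = ∅) : ¬ H.Adj p v := by
  intro ha
  have : v ∈ H.neighborSet p := ha
  rw [h] at this
  exact this

lemma not_adj_right {H : SimpleGraph V} {p v : V} (h : H.neighborSet p = ∅) : ¬ H.Adj v p :=
  fun ha => not_adj_left h ha.symm

lemma fresh_ne {H : SimpleGraph V} {p x : V} (hp : H.neighborSet p = ∅)
    (hx : (H.neighborSet x).Nonempty) : p ≠ x := by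
  rintro rfl; rw [hp] at hx; exact Set.not_nonempty_empty hx

lemma loop_path_length {G : SimpleGraph V} {v : V} {w : G.Walk v v} (h : w.IsPath) :
    w.length = 0 := by
  cases w with
  | nil => rfl
  | cons ha t =>
    exfalso
    rw [SimpleGraph.Walk.isPath_def, SimpleGraph.Walk.support_cons] at h
    exact (List.nodup_cons.mp h).1 t.end_mem_support

lemma exists_cons_of_ne {G : SimpleGraph V} {u v : V} (w : G.Walk u v) (hne : u ≠ v) :
    ∃ (z : V) (h : G.Adj u z) (t : G.Walk z v), w = SimpleGraph.Walk.cons h t := by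
  cases w with
  | nil => exact absurd rfl hne
  | cons h t => exact ⟨_, h, t, rfl⟩

lemma exists_cons_of_ne_nil {G : SimpleGraph V} {u : V} (w : G.Walk u u)
    (hne : w ≠ SimpleGraph.Walk.nil) :
    ∃ (z : V) (h : G.Adj u z) (t : G.Walk z u), w = SimpleGraph.Walk.cons h t := by
  cases w with
  | nil => exact absurd rfl hne
  | cons h t => exact ⟨_, h, t, rfl⟩

lemma walk_descend {G H : SimpleGraph V} {u v : V} (w : G.Walk u v)
    (hadj : ∀ a b, G.Adj a b → a ∈ w.support → b ∈ w.support → H.Adj a b) :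
    ∃ w' : H.Walk u v, w'.support = w.support ∧ w'.edges = w.edges ∧ w'.length = w.length := by
  induction w with
  | nil => exact ⟨SimpleGraph.Walk.nil, rfl, rfl, rfl⟩
  | @cons a b c h t ih =>
    obtain ⟨t', hs, he, hl⟩ := ih (fun a' b' hab ha hb =>
      hadj a' b' hab (by simp [SimpleGraph.Walk.support_cons, ha])
        (by simp [SimpleGraph.Walk.support_cons, hb]))
    refine ⟨SimpleGraph.Walk.cons (hadj a b h (by simp) (by simp [t.start_mem_support])) t',
      ?_, ?_, ?_⟩ <;> simp [hs, he, hl]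

lemma length_rotate [DecidableEq V] {G : SimpleGraph V} {u v : V} (c : G.Walk v v) (h : u ∈ c.support) :
    (c.rotate u h).length = c.length := by
  have := (SimpleGraph.Walk.rotate_edges c u h).perm.length_eq
  rwa [SimpleGraph.Walk.length_edges, SimpleGraph.Walk.length_edges] at this

lemma mem_support_of_rotate [DecidableEq V] {G : SimpleGraph V} {u v z : V} (c : G.Walk v v) (h : u ∈ c.support)
    (hz : z ∈ (c.rotate u h).support) : z ∈ c.support := by
  rw [(c.rotate u h).support_eq_cons] at hz
  rcases List.mem_cons.mp hz with rfl | hz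
  · exact h
  · have := ((SimpleGraph.Walk.support_rotate c u h).mem_iff).mp hz
    rw [c.support_eq_cons]
    exact List.mem_cons_of_mem _ this

lemma cycle_decomp {G : SimpleGraph V} {u p : V} (c : G.Walk u u) (hc : c.IsCycle)
    (hp : p ∈ c.support) :
    ∃ (z1 z2 : V) (_h1 : G.Adj p z1) (_h2 : G.Adj p z2) (m : G.Walk z1 z2),
      z1 ≠ z2 ∧ m.IsPath ∧ p ∉ m.support ∧ (∀ z ∈ m.support, z ∈ c.support) ∧
      c.length = m.length + 2 := by
  classical
  have hd : (c.rotate p hp).IsCycle := hc.rotate hp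
  have hdlen : (c.rotate p hp).length = c.length := length_rotate c hp
  have hdmem : ∀ z ∈ (c.rotate p hp).support, z ∈ c.support := fun z hz =>
    mem_support_of_rotate c hp hz
  obtain ⟨z1, h1, t, hteq⟩ := exists_cons_of_ne_nil (c.rotate p hp) hd.ne_nil
  rw [hteq] at hd hdlen hdmem
  obtain ⟨htp, hte⟩ := (SimpleGraph.Walk.cons_isCycle_iff t h1).mp hd
  obtain ⟨z2, h2, t2, hrev⟩ := exists_cons_of_ne t.reverse h1.ne
  have ht2 : t = t2.reverse.concat h2.symm := by
    have := congrArg SimpleGraph.Walk.reverse hrev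
    rwa [SimpleGraph.Walk.reverse_reverse, SimpleGraph.Walk.reverse_cons] at this
  have hrevpath : t.reverse.IsPath := (SimpleGraph.Walk.isPath_reverse_iff t).mpr htp
  rw [hrev, SimpleGraph.Walk.cons_isPath_iff] at hrevpath
  refine ⟨z1, z2, h1, h2, t2.reverse, ?_, ?_, ?_, ?_, ?_⟩
  · rintro rfl
    apply hte
    rw [ht2, SimpleGraph.Walk.edges_concat]
    simp [List.concat_eq_append, Sym2.eq_swap]
  · exact (SimpleGraph.Walk.isPath_reverse_iff t2).mpr hrevpath.1
  · intro hmem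
    rw [SimpleGraph.Walk.support_reverse, List.mem_reverse] at hmem
    exact hrevpath.2 hmem
  · intro z hz
    apply hdmem
    rw [SimpleGraph.Walk.support_cons]
    apply List.mem_cons_of_mem
    rw [SimpleGraph.Walk.support_reverse, List.mem_reverse] at hz
    have : z ∈ t.reverse.support := by
      rw [hrev, SimpleGraph.Walk.support_cons]
      exact List.mem_cons_of_mem _ hz
    rwa [SimpleGraph.Walk.support_reverse, List.mem_reverse] at this
  · have hlen2 : t.length = t2.length + 1 := by
      have := congrArg SimpleGraph.Walk.length hrev
      rw [SimpleGraph.Walk.length_reverse, SimpleGraph.Walk.length_cons] at this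
      omega
    rw [← hdlen, SimpleGraph.Walk.length_cons, SimpleGraph.Walk.length_reverse]
    omega

lemma walk_even {G : SimpleGraph V} {S : Set V}
    (hS : ∀ a b, G.Adj a b → (a ∈ S ↔ b ∉ S)) {u v : V} (w : G.Walk u v) :
    ((u ∈ S) ↔ (v ∈ S)) ↔ Even w.length := by
  induction w with
  | nil => simp
  | @cons a b c h t ih =>
    rw [SimpleGraph.Walk.length_cons, Nat.even_add_one, ← ih]
    have := hS _ _ h
    tauto

lemma support_closed {G : SimpleGraph V} {S : Set V}
    (hS : ∀ a b, G.Adj a b → a ∈ S → b ∈ S) {u v : V} (w : G.Walk u v) (hu : u ∈ S) :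
    ∀ z ∈ w.support, z ∈ S := by
  induction w with
  | nil => intro z hz; rw [SimpleGraph.Walk.support_nil] at hz; simpa [List.mem_singleton.mp hz]
  | @cons a b c h t ih =>
    intro z hz
    rw [SimpleGraph.Walk.support_cons, List.mem_cons] at hz
    rcases hz with rfl | hz
    · exact hu
    · exact ih (hS _ _ h hu) z hz

lemma not_dvd_succ_length {G : SimpleGraph V} {x y : V}
    (hC : ∀ (u : V) (c : G.Walk u u), c.IsCycle → ¬ 3 ∣ c.length)
    (hxy : G.Adj x y) (t : G.Walk y x) (ht : t.IsPath) : ¬ 3 ∣ (t.length + 1) := by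
  by_cases he : s(x, y) ∈ t.edges
  · have h1 : t.length = 1 := by
      cases t with
      | nil => simp at he
      | @cons a b c h t1 =>
        rw [SimpleGraph.Walk.edges_cons, List.mem_cons] at he
        rcases he with he | he
        · rw [Sym2.eq_iff] at he
          rcases he with ⟨rfl, _⟩ | ⟨rfl, _⟩
          · exact absurd rfl hxy.ne
          · have := loop_path_length ht.of_cons
            rw [SimpleGraph.Walk.length_cons]; omega
        · exfalso
          have hy : y ∈ t1.support := t1.snd_mem_support_of_mem_edges he
          rw [SimpleGraph.Walk.cons_isPath_iff] at ht
          exact ht.2 hy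
    omega
  · have hcyc := hC x (SimpleGraph.Walk.cons hxy t)
      ((SimpleGraph.Walk.cons_isCycle_iff t hxy).mpr ⟨ht, he⟩)
    rwa [SimpleGraph.Walk.length_cons] at hcyc



lemma first_decomp {G : SimpleGraph V} {u v : V} (w : G.Walk u v) (hne : u ≠ v)
    (hw : w.IsPath) :
    ∃ (z : V) (_h : G.Adj u z) (t : G.Walk z v), t.IsPath ∧ u ∉ t.support ∧
      (∀ s ∈ t.support, s ∈ w.support) ∧ w.length = t.length + 1 := by
  obtain ⟨z, h, t, rfl⟩ := exists_cons_of_ne w hne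
  rw [SimpleGraph.Walk.cons_isPath_iff] at hw
  exact ⟨z, h, t, hw.1, hw.2,
    fun s hs => by simp [SimpleGraph.Walk.support_cons, hs],
    by rw [SimpleGraph.Walk.length_cons]⟩

lemma last_decomp {G : SimpleGraph V} {u v : V} (w : G.Walk u v) (hne : v ≠ u)
    (hw : w.IsPath) :
    ∃ (z : V) (_h : G.Adj v z) (t : G.Walk u z), t.IsPath ∧ v ∉ t.support ∧
      (∀ s ∈ t.support, s ∈ w.support) ∧ w.length = t.length + 1 := by
  obtain ⟨z, h, t', hrev⟩ := exists_cons_of_ne w.reverse hne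
  have hwr : w.reverse.IsPath := (SimpleGraph.Walk.isPath_reverse_iff w).mpr hw
  rw [hrev, SimpleGraph.Walk.cons_isPath_iff] at hwr
  refine ⟨z, h, t'.reverse, (SimpleGraph.Walk.isPath_reverse_iff t').mpr hwr.1, ?_, ?_, ?_⟩
  · rw [SimpleGraph.Walk.support_reverse, List.mem_reverse]; exact hwr.2
  · intro s hs
    rw [SimpleGraph.Walk.support_reverse, List.mem_reverse] at hs
    have : s ∈ w.reverse.support := by
      rw [hrev, SimpleGraph.Walk.support_cons]; exact List.mem_cons_of_mem _ hs
    rwa [SimpleGraph.Walk.support_reverse, List.mem_reverse] at this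
  · have := congrArg SimpleGraph.Walk.length hrev
    rw [SimpleGraph.Walk.length_reverse, SimpleGraph.Walk.length_cons] at this
    rw [SimpleGraph.Walk.length_reverse]
    omega

lemma nbr_in_support {G : SimpleGraph V} {e u v : V} (t : G.Walk u v) (ht : t.IsPath)
    (he : e ∈ t.support) (hne : e ≠ u) :
    ∃ z, G.Adj e z ∧ z ∈ t.support := by
  classical
  have h1 : (t.takeUntil e he).IsPath := ht.takeUntil he
  obtain ⟨z, hz, t2, _, _, hsub, _⟩ := last_decomp (t.takeUntil e he) hne h1
  exact ⟨z, hz, t.support_takeUntil_subset he (hsub z t2.end_mem_support)⟩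

lemma lemF {H : SimpleGraph V} {x y a : V}
    (hC : ∀ (u : V) (c : H.Walk u u), c.IsCycle → ¬ 3 ∣ c.length)
    (hxy : H.Adj x y) (hxa : H.Adj x a)
    (hNx : ∀ v, H.Adj x v ↔ (v = y ∨ v = a))
    {m : H.Walk y a} (hm : m.IsPath) : ¬ 3 ∣ (m.length + 2) := by
  classical
  by_cases hya : y = a
  · subst hya; have := loop_path_length hm; omega
  by_cases hx : x ∈ m.support
  · have hspec := m.take_spec hx
    have ht1 : (m.takeUntil x hx).IsPath := hm.takeUntil hx
    have ht2 : (m.dropUntil x hx).IsPath := hm.dropUntil hx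
    have hmlen : m.length = (m.takeUntil x hx).length + (m.dropUntil x hx).length := by
      have := congrArg SimpleGraph.Walk.length hspec
      rw [SimpleGraph.Walk.length_append] at this
      omega
    -- support disjointness from m being a path
    have hnodup : m.support.Nodup := hm.support_nodup
    have hsuppm : m.support = (m.takeUntil x hx).support ++ (m.dropUntil x hx).support.tail := by
      rw [← SimpleGraph.Walk.support_append, hspec]
    -- t1 : Walk y x has length 1
    have hlen1 : (m.takeUntil x hx).length = 1 := by
      obtain ⟨z, hz, t, htp, hxt, hsub, hlen⟩ := last_decomp (m.takeUntil x hx) hxy.ne ht1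
      rcases (hNx z).mp hz with h | h
      · -- z = y : t : Walk y y
        subst h
        have := loop_path_length htp; omega
      · -- z = a : a ∈ t1.support, contradiction with a at end of t2
        subst h
        exfalso
        have ha1 : z ∈ (m.takeUntil x hx).support := hsub _ t.end_mem_support
        have ha2 : z ∈ (m.dropUntil x hx).support.tail := by
          obtain ⟨z2, hz2, t2, heq2⟩ := exists_cons_of_ne (m.dropUntil x hx) hxa.ne
          rw [heq2, SimpleGraph.Walk.support_cons, List.tail_cons]
          exact t2.end_mem_support
        rw [hsuppm] at hnodup
        exact (List.disjoint_of_nodup_append hnodup) ha1 ha2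
    have hlen2 : (m.dropUntil x hx).length = 1 := by
      obtain ⟨z, hz, t, heq⟩ := exists_cons_of_ne (m.dropUntil x hx) hxa.ne
      rcases (hNx z).mp hz with h | h <;> subst h
      · -- z = y : y in dropUntil tail, but y is start of takeUntil
        exfalso
        have hy1 : z ∈ (m.takeUntil x hx).support := (m.takeUntil x hx).start_mem_support
        have hy2 : z ∈ (m.dropUntil x hx).support.tail := by
          rw [heq, SimpleGraph.Walk.support_cons, List.tail_cons]
          exact t.start_mem_support
        rw [hsuppm] at hnodup
        exact (List.disjoint_of_nodup_append hnodup) hy1 hy2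
      · -- z = a : t : Walk a a
        rw [heq, SimpleGraph.Walk.cons_isPath_iff] at ht2
        have := loop_path_length ht2.1
        have := congrArg SimpleGraph.Walk.length heq
        rw [SimpleGraph.Walk.length_cons] at this
        omega
    omega
  · -- x ∉ m.support : build a cycle
    have hq : (m.concat hxa.symm).IsPath := by
      have : (m.concat hxa.symm).reverse.IsPath := by
        rw [SimpleGraph.Walk.reverse_concat]
        exact SimpleGraph.Walk.IsPath.cons ((SimpleGraph.Walk.isPath_reverse_iff m).mpr hm)
          (by rwa [SimpleGraph.Walk.support_reverse, List.mem_reverse])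
      rw [SimpleGraph.Walk.isPath_reverse_iff] at this
      exact this
    have hne : s(x, y) ∉ (m.concat hxa.symm).edges := by
      rw [SimpleGraph.Walk.edges_concat, List.concat_eq_append]
      intro hmem
      rcases List.mem_append.mp hmem with hmem | hmem
      · exact hx (m.fst_mem_support_of_mem_edges hmem)
      · rw [List.mem_singleton, Sym2.eq_iff] at hmem
        rcases hmem with ⟨rfl, _⟩ | ⟨-, rfl⟩
        · exact hxa.ne rfl
        · exact hya rfl
    have hcyc := hC x (SimpleGraph.Walk.cons hxy (m.concat hxa.symm))
      ((SimpleGraph.Walk.cons_isCycle_iff _ hxy).mpr ⟨hq, hne⟩)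
    rw [SimpleGraph.Walk.length_cons, SimpleGraph.Walk.length_concat] at hcyc
    intro hd
    exact hcyc (by omega)



end ExcProof

namespace ExcProof

def Inv (G : SimpleGraph V) (x y : V) : Prop :=
  x ≠ y ∧ (G.neighborSet x).Nonempty ∧ (G.neighborSet y).Nonempty ∧
  (∀ (u : V) (c : G.Walk u u), c.IsCycle → ¬ 3 ∣ c.length) ∧
  (¬ G.Adj x y → ∀ P : G.Walk x y, P.IsPath → ¬ 3 ∣ P.length)

theorem excAux_inv {G : SimpleGraph V} {r x y : V} (h : ExcAux G r x y) : Inv G x y := by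
  induction h with
  | base r x y a b hd =>
    classical
    simp only [List.pairwise_cons, List.mem_cons, List.not_mem_nil, or_false,
      List.mem_singleton, List.Pairwise.nil, and_true, forall_eq_or_imp, forall_eq] at hd
    obtain ⟨⟨hrx, hry, hra, hrb⟩, ⟨hxy, hxa, hxb⟩, ⟨hya, hyb⟩, hab⟩ := hd
    set G0 := SimpleGraph.fromEdgeSet
      {s(r, a), s(r, b), s(x, a), s(x, b), s(y, a), s(y, b)} with hG0
    have hT : ∀ u v, G0.Adj u v →
        (u = r ∨ u = x ∨ u = y ∨ u = a ∨ u = b) ∧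
        (v = r ∨ v = x ∨ v = y ∨ v = a ∨ v = b) := by
      intro u v huv
      rw [hG0, SimpleGraph.fromEdgeSet_adj] at huv
      obtain ⟨hm, -⟩ := huv
      simp only [Set.mem_insert_iff, Set.mem_singleton_iff, Sym2.eq_iff] at hm
      tauto
    have hbip : ∀ u v, G0.Adj u v →
        ((u = a ∨ u = b) ↔ ¬(v = a ∨ v = b)) := by
      intro u v huv
      rw [hG0, SimpleGraph.fromEdgeSet_adj] at huv
      obtain ⟨hm, -⟩ := huv
      simp only [Set.mem_insert_iff, Set.mem_singleton_iff, Sym2.eq_iff] at hm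
      rcases hm with (⟨rfl,rfl⟩|⟨rfl,rfl⟩)|(⟨rfl,rfl⟩|⟨rfl,rfl⟩)|(⟨rfl,rfl⟩|⟨rfl,rfl⟩)|
        (⟨rfl,rfl⟩|⟨rfl,rfl⟩)|(⟨rfl,rfl⟩|⟨rfl,rfl⟩)|(⟨rfl,rfl⟩|⟨rfl,rfl⟩) <;> simp_all
    have hbipS : ∀ u v, G0.Adj u v →
        ((u ∈ {z : V | z = a ∨ z = b}) ↔ (v ∉ {z : V | z = a ∨ z = b})) := by
      intro u v huv
      simpa using hbip u v huv
    have hclS : ∀ u v, G0.Adj u v →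
        u ∈ {z : V | z = r ∨ z = x ∨ z = y ∨ z = a ∨ z = b} →
        v ∈ {z : V | z = r ∨ z = x ∨ z = y ∨ z = a ∨ z = b} := by
      intro u v huv _
      exact (hT u v huv).2
    have hcard : ∀ (l : List V), l.Nodup →
        (∀ z ∈ l, z = r ∨ z = x ∨ z = y ∨ z = a ∨ z = b) → l.length ≤ 5 := by
      intro l hnd hsub
      have h1 : l.toFinset ⊆ ({r, x, y, a, b} : Finset V) := by
        intro z hz
        rw [List.mem_toFinset] at hz
        simpa using hsub z hz
      have h2 : l.toFinset.card = l.length := List.toFinset_card_of_nodup hnd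
      have h3 : ({r, x, y, a, b} : Finset V).card ≤ 5 := by
        have := ([r, x, y, a, b] : List V).toFinset_card_le
        simpa using this
      have := Finset.card_le_card h1
      omega
    refine ⟨hxy, ⟨a, ?_⟩, ⟨a, ?_⟩, ?_, ?_⟩
    · rw [SimpleGraph.mem_neighborSet, hG0, SimpleGraph.fromEdgeSet_adj]
      exact ⟨by simp, hxa⟩
    · rw [SimpleGraph.mem_neighborSet, hG0, SimpleGraph.fromEdgeSet_adj]
      exact ⟨by simp, hya⟩
    · -- no cycles of length divisible by 3
      intro u c hc hdvd
      have h3 := hc.three_le_length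
      obtain ⟨z, hz, t, hceq⟩ := exists_cons_of_ne_nil c hc.ne_nil
      have hu : u ∈ {z : V | z = r ∨ z = x ∨ z = y ∨ z = a ∨ z = b} := (hT u z hz).1
      have hsub : ∀ z' ∈ c.support, z' = r ∨ z' = x ∨ z' = y ∨ z' = a ∨ z' = b :=
        fun z' hz' => support_closed hclS c hu z' hz'
      have hnd : c.support.tail.Nodup := hc.2
      have hlen : c.support.tail.length = c.length := by
        have h1 := c.length_support
        rw [List.length_tail, h1]
        omega
      have hbound : c.length ≤ 5 := by
        rw [← hlen]
        exact hcard _ hnd (fun z' hz' => hsub z' (by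
          rw [c.support_eq_cons]
          exact List.mem_cons_of_mem _ hz'))
      have heven : Even c.length := (walk_even hbipS c).mp Iff.rfl
      rw [Nat.even_iff] at heven
      omega
    · -- path condition
      intro hnadj P hP hdvd
      have hxS : x ∉ {z : V | z = a ∨ z = b} := by simp [hxa, hxb]
      have hyS : y ∉ {z : V | z = a ∨ z = b} := by simp [hya, hyb]
      have heven : Even P.length := (walk_even hbipS P).mp (by tauto)
      have hsub : ∀ z' ∈ P.support, z' = r ∨ z' = x ∨ z' = y ∨ z' = a ∨ z' = b :=
        fun z' hz' => support_closed hclS P (by simp) z' hz'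
      have hbound : P.length ≤ 4 := by
        have h5 := hcard _ hP.support_nodup hsub
        have := P.length_support
        omega
      have hne0 : P.length ≠ 0 := by
        intro h0
        cases P with
        | nil => exact hxy rfl
        | cons _ _ => simp at h0
      rw [Nat.even_iff] at heven
      omega
  | symm G r x y h ih =>
    obtain ⟨hne, hx, hy, hC, hP⟩ := ih
    refine ⟨hne.symm, hy, hx, hC, fun hna P hP' hdvd => ?_⟩
    have := hP (fun hadj => hna hadj.symm) P.reverse hP'.reverse
    rw [SimpleGraph.Walk.length_reverse] at this
    exact this hdvd
  | addPath H r x y p q h hnadj hpq hNp hNq ih =>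
    classical
    obtain ⟨hxy, hNEx, hNEy, hC, hPath⟩ := ih
    set G' := H ⊔ SimpleGraph.fromEdgeSet {s(x, p), s(p, q), s(q, y)} with hG'
    have hpx : p ≠ x := fresh_ne hNp hNEx
    have hpy : p ≠ y := fresh_ne hNp hNEy
    have hqx : q ≠ x := fresh_ne hNq hNEx
    have hqy : q ≠ y := fresh_ne hNq hNEy
    have hadj_p : ∀ v, G'.Adj p v ↔ (v = x ∨ v = q) := by
      intro v
      rw [hG', SimpleGraph.sup_adj, SimpleGraph.fromEdgeSet_adj]
      simp only [Set.mem_insert_iff, Set.mem_singleton_iff, Sym2.eq_iff]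
      constructor
      · rintro (hH | ⟨hm, hne⟩)
        · exact absurd hH (not_adj_left hNp)
        · tauto
      · rintro (rfl | rfl)
        · exact Or.inr ⟨by simp, hpx⟩
        · exact Or.inr ⟨by simp, hpq⟩
    have hadj_q : ∀ v, G'.Adj q v ↔ (v = p ∨ v = y) := by
      intro v
      rw [hG', SimpleGraph.sup_adj, SimpleGraph.fromEdgeSet_adj]
      simp only [Set.mem_insert_iff, Set.mem_singleton_iff, Sym2.eq_iff]
      constructor
      · rintro (hH | ⟨hm, hne⟩)
        · exact absurd hH (not_adj_left hNq)
        · have := hpq.symm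
          tauto
      · rintro (rfl | rfl)
        · exact Or.inr ⟨by simp, hpq.symm⟩
        · exact Or.inr ⟨by simp, hqy⟩
    have hedge_H : ∀ u v, G'.Adj u v → u ≠ p → u ≠ q → v ≠ p → v ≠ q → H.Adj u v := by
      intro u v huv hu1 hu2 hv1 hv2
      rw [hG', SimpleGraph.sup_adj, SimpleGraph.fromEdgeSet_adj] at huv
      rcases huv with hH | ⟨hm, -⟩
      · exact hH
      · exfalso
        simp only [Set.mem_insert_iff, Set.mem_singleton_iff, Sym2.eq_iff] at hm
        tauto
    have hApq : G'.Adj p q := (hadj_p q).mpr (Or.inr rfl)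
    refine ⟨hpq, ⟨q, hApq⟩, ⟨p, (hadj_q p).mpr (Or.inl rfl)⟩, ?_, fun hna => absurd hApq hna⟩
    intro u c hc hdvd
    have key : ∀ (m' : G'.Walk q x), m'.IsPath → p ∉ m'.support →
        3 ∣ (m'.length + 2) → False := by
      intro m' hm' hpm' hdvd'
      obtain ⟨z3, h3, t3, ht3, hq3, hsub3, hlen3⟩ := first_decomp m' hqx hm'
      rcases (hadj_q z3).mp h3 with h | h
      · subst h
        exact hpm' (hsub3 _ t3.start_mem_support)
      · subst h
        obtain ⟨t', hts, hte, htl⟩ := walk_descend t3 (fun a' b' hab ha hb =>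
          hedge_H a' b' hab
            (fun he => hpm' (hsub3 _ (he ▸ ha)))
            (fun he => hq3 (he ▸ ha))
            (fun he => hpm' (hsub3 _ (he ▸ hb)))
            (fun he => hq3 (he ▸ hb)))
        have ht'p : t'.IsPath := by
          rw [SimpleGraph.Walk.isPath_def, hts]
          exact ht3.support_nodup
        have hP' := hPath hnadj t'.reverse ((SimpleGraph.Walk.isPath_reverse_iff t').mpr ht'p)
        rw [SimpleGraph.Walk.length_reverse] at hP'
        exact hP' (by omega)
    by_cases hpc : p ∈ c.support
    · obtain ⟨z1, z2, h1, h2, m, hz12, hmp, hpm, hmem, hlen⟩ := cycle_decomp c hc hpc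
      rcases (hadj_p z1).mp h1 with hA | hA <;> rcases (hadj_p z2).mp h2 with hB | hB
      · exact hz12 (hA.trans hB.symm)
      · subst hA; subst hB
        exact key m.reverse hmp.reverse
          (by rwa [SimpleGraph.Walk.support_reverse, List.mem_reverse])
          (by rw [SimpleGraph.Walk.length_reverse]; omega)
      · subst hA; subst hB
        exact key m hmp hpm (by omega)
      · exact hz12 (hA.trans hB.symm)
    · by_cases hqc : q ∈ c.support
      · obtain ⟨z1, z2, h1, h2, m, hz12, hmp, hpm, hmem, hlen⟩ := cycle_decomp c hc hqc
        rcases (hadj_q z1).mp h1 with hA | hA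
        · exact hpc (hmem _ (hA ▸ m.start_mem_support))
        · rcases (hadj_q z2).mp h2 with hB | hB
          · exact hpc (hmem _ (hB ▸ m.end_mem_support))
          · exact hz12 (hA.trans hB.symm)
      · obtain ⟨c', hcs, hce, hcl⟩ := walk_descend c (fun a' b' hab ha hb =>
          hedge_H a' b' hab
            (fun he => hpc (he ▸ ha)) (fun he => hqc (he ▸ ha))
            (fun he => hpc (he ▸ hb)) (fun he => hqc (he ▸ hb)))
        have hc' : c'.IsCycle := by
          rw [SimpleGraph.Walk.isCycle_def] at hc ⊢
          refine ⟨?_, ?_, ?_⟩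
          · rw [SimpleGraph.Walk.isTrail_def, hce]
            exact hc.1.edges_nodup
          · intro hnil
            have h3 := SimpleGraph.Walk.IsCircuit.three_le_length (SimpleGraph.Walk.IsCycle.isCircuit
              (by rw [SimpleGraph.Walk.isCycle_def]; exact hc))
            rw [hnil] at hcl
            simp at hcl
            omega
          · rw [hcs]
            exact hc.2.2
        exact hC u c' hc' (by omega)
  | addTwin H r x y w a h hxy hNx hNw ih =>
    classical
    obtain ⟨hxy0, hNEx, hNEy, hC, hPath⟩ := ih
    set G' := H ⊔ SimpleGraph.fromEdgeSet {s(w, y), s(w, a)} with hG'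
    have hxaA : H.Adj x a := by
      have : a ∈ H.neighborSet x := by rw [hNx]; simp
      exact this
    have hwx : w ≠ x := fresh_ne hNw hNEx
    have hwy : w ≠ y := fresh_ne hNw ⟨x, hxy.symm⟩
    have hwa : w ≠ a := fresh_ne hNw ⟨x, hxaA.symm⟩
    have hNxH : ∀ v, H.Adj x v ↔ (v = y ∨ v = a) := by
      intro v
      rw [← SimpleGraph.mem_neighborSet, hNx]
      simp
    have hadj_w : ∀ v, G'.Adj w v ↔ (v = y ∨ v = a) := by
      intro v
      rw [hG', SimpleGraph.sup_adj, SimpleGraph.fromEdgeSet_adj]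
      simp only [Set.mem_insert_iff, Set.mem_singleton_iff, Sym2.eq_iff]
      constructor
      · rintro (hH | ⟨hm, hne⟩)
        · exact absurd hH (not_adj_left hNw)
        · tauto
      · rintro (rfl | rfl)
        · exact Or.inr ⟨by simp, hwy⟩
        · exact Or.inr ⟨by simp, hwa⟩
    have hedge_H : ∀ u v, G'.Adj u v → u ≠ w → v ≠ w → H.Adj u v := by
      intro u v huv hu1 hv1
      rw [hG', SimpleGraph.sup_adj, SimpleGraph.fromEdgeSet_adj] at huv
      rcases huv with hH | ⟨hm, -⟩
      · exact hH
      · exfalso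
        simp only [Set.mem_insert_iff, Set.mem_singleton_iff, Sym2.eq_iff] at hm
        tauto
    have hnadj_xw : ¬ G'.Adj x w := by
      rw [hG', SimpleGraph.sup_adj, SimpleGraph.fromEdgeSet_adj]
      rintro (hH | ⟨hm, -⟩)
      · rcases (hNxH w).mp hH with h | h
        · exact hwy h
        · exact hwa h
      · simp only [Set.mem_insert_iff, Set.mem_singleton_iff, Sym2.eq_iff] at hm
        rcases hm with (⟨h1, h2⟩ | ⟨h1, h2⟩) | (⟨h1, h2⟩ | ⟨h1, h2⟩)
        · exact hwx h1.symm
        · exact hxy0 h1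
        · exact hwx h1.symm
        · exact hxaA.ne h1
    have hCnew : ∀ (u : V) (c : G'.Walk u u), c.IsCycle → ¬ 3 ∣ c.length := by
      intro u c hc hdvd
      by_cases hwc : w ∈ c.support
      · obtain ⟨z1, z2, h1, h2, m, hz12, hmp, hwm, hmem, hlen⟩ := cycle_decomp c hc hwc
        have key : ∀ (m' : G'.Walk y a), m'.IsPath → w ∉ m'.support →
            3 ∣ (m'.length + 2) → False := by
          intro m' hm' hwm' hdvd'
          obtain ⟨mH, hms, hme, hml⟩ := walk_descend m' (fun a' b' hab ha hb =>
            hedge_H a' b' hab (fun he => hwm' (he ▸ ha)) (fun he => hwm' (he ▸ hb)))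
          have hmHp : mH.IsPath := by
            rw [SimpleGraph.Walk.isPath_def, hms]
            exact hm'.support_nodup
          exact lemF hC hxy hxaA hNxH hmHp (by omega)
        rcases (hadj_w z1).mp h1 with hA | hA <;> rcases (hadj_w z2).mp h2 with hB | hB
        · exact hz12 (hA.trans hB.symm)
        · subst hA; subst hB
          exact key m hmp hwm (by omega)
        · subst hA; subst hB
          exact key m.reverse hmp.reverse
            (by rwa [SimpleGraph.Walk.support_reverse, List.mem_reverse])
            (by rw [SimpleGraph.Walk.length_reverse]; omega)
        · exact hz12 (hA.trans hB.symm)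
      · obtain ⟨c', hcs, hce, hcl⟩ := walk_descend c (fun a' b' hab ha hb =>
          hedge_H a' b' hab (fun he => hwc (he ▸ ha)) (fun he => hwc (he ▸ hb)))
        have hc' : c'.IsCycle := by
          rw [SimpleGraph.Walk.isCycle_def] at hc ⊢
          refine ⟨?_, ?_, ?_⟩
          · rw [SimpleGraph.Walk.isTrail_def, hce]
            exact hc.1.edges_nodup
          · intro hnil
            have h3 := SimpleGraph.Walk.IsCircuit.three_le_length (SimpleGraph.Walk.IsCycle.isCircuit
              (by rw [SimpleGraph.Walk.isCycle_def]; exact hc))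
            rw [hnil] at hcl
            simp at hcl
            omega
          · rw [hcs]
            exact hc.2.2
        exact hC u c' hc' (by omega)
    have hAxy' : G'.Adj x y := by
      rw [hG', SimpleGraph.sup_adj]
      exact Or.inl hxy
    refine ⟨hwx.symm, ⟨y, hAxy'⟩, ⟨y, (hadj_w y).mpr (Or.inl rfl)⟩, hCnew, ?_⟩
    intro _ P hP hdvd
    obtain ⟨z, hz, t, htp, hwt, hsub, hlen⟩ := last_decomp P hwx hP
    obtain ⟨tH, hts, hte, htl⟩ := walk_descend t (fun a' b' hab ha hb =>
      hedge_H a' b' hab (fun he => hwt (he ▸ ha)) (fun he => hwt (he ▸ hb)))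
    have htHp : tH.IsPath := by
      rw [SimpleGraph.Walk.isPath_def, hts]
      exact htp.support_nodup
    rcases (hadj_w z).mp hz with hA | hA
    · subst hA
      have := not_dvd_succ_length hC hxy tH.reverse
        ((SimpleGraph.Walk.isPath_reverse_iff tH).mpr htHp)
      rw [SimpleGraph.Walk.length_reverse] at this
      exact this (by omega)
    · subst hA
      have := not_dvd_succ_length hC hxaA tH.reverse
        ((SimpleGraph.Walk.isPath_reverse_iff tH).mpr htHp)
      rw [SimpleGraph.Walk.length_reverse] at this
      exact this (by omega)
  | addSquare H r x y a b c d h hxy hd hNa hNb hNc hNd ih =>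
    classical
    obtain ⟨hxy0, hNEx, hNEy, hC, hPath⟩ := ih
    set G' := H ⊔ SimpleGraph.fromEdgeSet
      {s(a, b), s(b, c), s(c, d), s(d, a), s(x, a), s(c, y)} with hG'
    simp only [List.pairwise_cons, List.mem_cons, List.not_mem_nil, or_false,
      List.mem_singleton, List.Pairwise.nil, and_true, forall_eq_or_imp, forall_eq] at hd
    obtain ⟨⟨hab, hac, had⟩, ⟨hbc, hbd⟩, hcd, -⟩ := hd
    have hax : a ≠ x := fresh_ne hNa hNEx
    have hay : a ≠ y := fresh_ne hNa hNEy
    have hbx : b ≠ x := fresh_ne hNb hNEx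
    have hby : b ≠ y := fresh_ne hNb hNEy
    have hcx : c ≠ x := fresh_ne hNc hNEx
    have hcy : c ≠ y := fresh_ne hNc hNEy
    have hdx : d ≠ x := fresh_ne hNd hNEx
    have hdy : d ≠ y := fresh_ne hNd hNEy
    have hadj_a : ∀ v, G'.Adj a v ↔ (v = b ∨ v = d ∨ v = x) := by
      intro v
      rw [hG', SimpleGraph.sup_adj, SimpleGraph.fromEdgeSet_adj]
      simp only [Set.mem_insert_iff, Set.mem_singleton_iff, Sym2.eq_iff]
      constructor
      · rintro (hH | ⟨hm, hne⟩)
        · exact absurd hH (not_adj_left hNa)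
        · rcases hm with (⟨h1,h2⟩|⟨h1,h2⟩)|(⟨h1,h2⟩|⟨h1,h2⟩)|(⟨h1,h2⟩|⟨h1,h2⟩)|(⟨h1,h2⟩|⟨h1,h2⟩)|(⟨h1,h2⟩|⟨h1,h2⟩)|(⟨h1,h2⟩|⟨h1,h2⟩) <;> simp_all
      · rintro (rfl | rfl | rfl)
        · exact Or.inr ⟨by simp, hab⟩
        · exact Or.inr ⟨by simp, had⟩
        · exact Or.inr ⟨by simp, hax⟩
    have hadj_b : ∀ v, G'.Adj b v ↔ (v = a ∨ v = c) := by
      intro v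
      rw [hG', SimpleGraph.sup_adj, SimpleGraph.fromEdgeSet_adj]
      simp only [Set.mem_insert_iff, Set.mem_singleton_iff, Sym2.eq_iff]
      constructor
      · rintro (hH | ⟨hm, hne⟩)
        · exact absurd hH (not_adj_left hNb)
        · rcases hm with (⟨h1,h2⟩|⟨h1,h2⟩)|(⟨h1,h2⟩|⟨h1,h2⟩)|(⟨h1,h2⟩|⟨h1,h2⟩)|(⟨h1,h2⟩|⟨h1,h2⟩)|(⟨h1,h2⟩|⟨h1,h2⟩)|(⟨h1,h2⟩|⟨h1,h2⟩) <;> simp_all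
      · rintro (rfl | rfl)
        · exact Or.inr ⟨by simp, fun hh => hab hh.symm⟩
        · exact Or.inr ⟨by simp, hbc⟩
    have hadj_c : ∀ v, G'.Adj c v ↔ (v = b ∨ v = d ∨ v = y) := by
      intro v
      rw [hG', SimpleGraph.sup_adj, SimpleGraph.fromEdgeSet_adj]
      simp only [Set.mem_insert_iff, Set.mem_singleton_iff, Sym2.eq_iff]
      constructor
      · rintro (hH | ⟨hm, hne⟩)
        · exact absurd hH (not_adj_left hNc)
        · rcases hm with (⟨h1,h2⟩|⟨h1,h2⟩)|(⟨h1,h2⟩|⟨h1,h2⟩)|(⟨h1,h2⟩|⟨h1,h2⟩)|(⟨h1,h2⟩|⟨h1,h2⟩)|(⟨h1,h2⟩|⟨h1,h2⟩)|(⟨h1,h2⟩|⟨h1,h2⟩) <;> simp_all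
      · rintro (rfl | rfl | rfl)
        · exact Or.inr ⟨by simp, fun hh => hbc hh.symm⟩
        · exact Or.inr ⟨by simp, hcd⟩
        · exact Or.inr ⟨by simp, hcy⟩
    have hadj_d : ∀ v, G'.Adj d v ↔ (v = a ∨ v = c) := by
      intro v
      rw [hG', SimpleGraph.sup_adj, SimpleGraph.fromEdgeSet_adj]
      simp only [Set.mem_insert_iff, Set.mem_singleton_iff, Sym2.eq_iff]
      constructor
      · rintro (hH | ⟨hm, hne⟩)
        · exact absurd hH (not_adj_left hNd)
        · rcases hm with (⟨h1,h2⟩|⟨h1,h2⟩)|(⟨h1,h2⟩|⟨h1,h2⟩)|(⟨h1,h2⟩|⟨h1,h2⟩)|(⟨h1,h2⟩|⟨h1,h2⟩)|(⟨h1,h2⟩|⟨h1,h2⟩)|(⟨h1,h2⟩|⟨h1,h2⟩) <;> simp_all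
      · rintro (rfl | rfl)
        · exact Or.inr ⟨by simp, fun hh => had hh.symm⟩
        · exact Or.inr ⟨by simp, fun hh => hcd hh.symm⟩
    have hedge_H : ∀ u v, G'.Adj u v → u ≠ a → u ≠ b → u ≠ c → u ≠ d →
        v ≠ a → v ≠ b → v ≠ c → v ≠ d → H.Adj u v := by
      intro u v huv hu1 hu2 hu3 hu4 hv1 hv2 hv3 hv4
      rw [hG', SimpleGraph.sup_adj, SimpleGraph.fromEdgeSet_adj] at huv
      rcases huv with hH | ⟨hm, -⟩
      · exact hH
      · exfalso
        simp only [Set.mem_insert_iff, Set.mem_singleton_iff, Sym2.eq_iff] at hm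
        rcases hm with (⟨h1,h2⟩|⟨h1,h2⟩)|(⟨h1,h2⟩|⟨h1,h2⟩)|(⟨h1,h2⟩|⟨h1,h2⟩)|(⟨h1,h2⟩|⟨h1,h2⟩)|(⟨h1,h2⟩|⟨h1,h2⟩)|(⟨h1,h2⟩|⟨h1,h2⟩) <;> simp_all
    have keyS : ∀ (e f : V),
        (∀ v, G'.Adj f v ↔ (v = a ∨ v = c)) →
        (∀ v, G'.Adj a v ↔ (v = e ∨ v = f ∨ v = x)) →
        (∀ v, G'.Adj c v ↔ (v = e ∨ v = f ∨ v = y)) →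
        (∀ u v, G'.Adj u v → u ≠ a → u ≠ c → u ≠ e → u ≠ f →
          v ≠ a → v ≠ c → v ≠ e → v ≠ f → H.Adj u v) →
        f ≠ a → f ≠ c → f ≠ x →
        ∀ (m : G'.Walk a c), m.IsPath → e ∉ m.support → 3 ∣ (m.length + 2) → False := by
      intro e f hNf hNa' hNc' hedgeEF hfa hfc hfx m hm hem hdvd3
      obtain ⟨z1, hz1, t, htp, hat, hsubt, hlent⟩ := first_decomp m hac hm
      rcases (hNa' z1).mp hz1 with h1 | h1 | h1
      · subst h1
        exact hem (hsubt _ t.start_mem_support)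
      · subst h1
        obtain ⟨z2, hz2, t2, ht2p, hft2, hsub2, hlen2⟩ := first_decomp t hfc htp
        rcases (hNf z2).mp hz2 with h2 | h2
        · subst h2
          exact hat (hsub2 _ t2.start_mem_support)
        · subst h2
          have := loop_path_length ht2p
          omega
      · subst h1
        have het : e ∉ t.support := fun hh => hem (hsubt _ hh)
        obtain ⟨z3, hz3, t3, ht3p, hct3, hsub3, hlen3⟩ := last_decomp t hcx htp
        rcases (hNc' z3).mp hz3 with h3 | h3 | h3
        · subst h3
          exact het (hsub3 _ t3.end_mem_support)
        · subst h3
          obtain ⟨z4, hz4, t4, _, _, hsub4, _⟩ := last_decomp t3 hfx ht3p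
          rcases (hNf z4).mp hz4 with h4 | h4
          · subst h4
            exact hat (hsub3 _ (hsub4 _ t4.end_mem_support))
          · subst h4
            exact hct3 (hsub4 _ t4.end_mem_support)
        · subst h3
          have hft3 : f ∉ t3.support := by
            intro hf
            obtain ⟨z5, hz5, hz5mem⟩ := nbr_in_support t3 ht3p hf hfx
            rcases (hNf z5).mp hz5 with h5 | h5
            · subst h5
              exact hat (hsub3 _ hz5mem)
            · subst h5
              exact hct3 hz5mem
          have hat3 : ∀ s ∈ t3.support, s ≠ a := fun s hs he' => hat (hsub3 _ (he' ▸ hs))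
          have hct3' : ∀ s ∈ t3.support, s ≠ c := fun s hs he' => hct3 (he' ▸ hs)
          have het3 : ∀ s ∈ t3.support, s ≠ e := fun s hs he' => het (hsub3 _ (he' ▸ hs))
          have hft3' : ∀ s ∈ t3.support, s ≠ f := fun s hs he' => hft3 (he' ▸ hs)
          obtain ⟨tH, hts, hte', htl⟩ := walk_descend t3 (fun a' b' hab' ha' hb' =>
            hedgeEF a' b' hab' (hat3 _ ha') (hct3' _ ha') (het3 _ ha') (hft3' _ ha')
              (hat3 _ hb') (hct3' _ hb') (het3 _ hb') (hft3' _ hb'))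
          have htHp : tH.IsPath := by
            rw [SimpleGraph.Walk.isPath_def, hts]
            exact ht3p.support_nodup
          have := not_dvd_succ_length hC hxy tH.reverse
            ((SimpleGraph.Walk.isPath_reverse_iff tH).mpr htHp)
          rw [SimpleGraph.Walk.length_reverse] at this
          exact this (by omega)
    have keyS_b := fun m hm hem hdvd3 => keyS b d hadj_d hadj_a hadj_c
      (fun u v huv h1 h2 h3 h4 h5 h6 h7 h8 => hedge_H u v huv h1 h3 h2 h4 h5 h7 h6 h8)
      (fun hh => had hh.symm) (fun hh => hcd hh.symm) hdx m hm hem hdvd3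
    have keyS_d := fun m hm hem hdvd3 => keyS d b hadj_b
      (fun v => by rw [hadj_a]; tauto) (fun v => by rw [hadj_c]; tauto)
      (fun u v huv h1 h2 h3 h4 h5 h6 h7 h8 => hedge_H u v huv h1 h4 h2 h3 h5 h8 h6 h7)
      (fun hh => hab hh.symm) hbc hbx m hm hem hdvd3
    have hCnew : ∀ (u : V) (cw : G'.Walk u u), cw.IsCycle → ¬ 3 ∣ cw.length := by
      intro u cw hcw hdvd
      by_cases hbs : b ∈ cw.support
      · obtain ⟨z1, z2, h1, h2, m, hz12, hmp, hbm, hmem, hlen⟩ := cycle_decomp cw hcw hbs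
        rcases (hadj_b z1).mp h1 with hA | hA <;> rcases (hadj_b z2).mp h2 with hB | hB
        · exact hz12 (hA.trans hB.symm)
        · subst hA; subst hB
          exact keyS_b m hmp hbm (by omega)
        · subst hA; subst hB
          exact keyS_b m.reverse hmp.reverse
            (by rwa [SimpleGraph.Walk.support_reverse, List.mem_reverse])
            (by rw [SimpleGraph.Walk.length_reverse]; omega)
        · exact hz12 (hA.trans hB.symm)
      · by_cases hds : d ∈ cw.support
        · obtain ⟨z1, z2, h1, h2, m, hz12, hmp, hdm, hmem, hlen⟩ := cycle_decomp cw hcw hds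
          rcases (hadj_d z1).mp h1 with hA | hA <;> rcases (hadj_d z2).mp h2 with hB | hB
          · exact hz12 (hA.trans hB.symm)
          · subst hA; subst hB
            exact keyS_d m hmp hdm (by omega)
          · subst hA; subst hB
            exact keyS_d m.reverse hmp.reverse
              (by rwa [SimpleGraph.Walk.support_reverse, List.mem_reverse])
              (by rw [SimpleGraph.Walk.length_reverse]; omega)
          · exact hz12 (hA.trans hB.symm)
        · by_cases has : a ∈ cw.support
          · obtain ⟨z1, z2, h1, h2, m, hz12, hmp, ham, hmem, hlen⟩ := cycle_decomp cw hcw has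
            have hget : ∀ z', G'.Adj a z' → z' ∈ cw.support → z' = x := by
              intro z' hz' hm'
              rcases (hadj_a z').mp hz' with h' | h' | h'
              · exact absurd (h' ▸ hm') hbs
              · exact absurd (h' ▸ hm') hds
              · exact h'
            have e1 : z1 = x := hget z1 h1 (hmem _ m.start_mem_support)
            have e2 : z2 = x := hget z2 h2 (hmem _ m.end_mem_support)
            exact hz12 (e1.trans e2.symm)
          · by_cases hcs : c ∈ cw.support
            · obtain ⟨z1, z2, h1, h2, m, hz12, hmp, hcm, hmem, hlen⟩ := cycle_decomp cw hcw hcs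
              have hget : ∀ z', G'.Adj c z' → z' ∈ cw.support → z' = y := by
                intro z' hz' hm'
                rcases (hadj_c z').mp hz' with h' | h' | h'
                · exact absurd (h' ▸ hm') hbs
                · exact absurd (h' ▸ hm') hds
                · exact h'
              have e1 : z1 = y := hget z1 h1 (hmem _ m.start_mem_support)
              have e2 : z2 = y := hget z2 h2 (hmem _ m.end_mem_support)
              exact hz12 (e1.trans e2.symm)
            · obtain ⟨c', hcs', hce', hcl'⟩ := walk_descend cw (fun a' b' hab' ha' hb' =>
                hedge_H a' b' hab'
                  (fun he' => has (he' ▸ ha')) (fun he' => hbs (he' ▸ ha'))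
                  (fun he' => hcs (he' ▸ ha')) (fun he' => hds (he' ▸ ha'))
                  (fun he' => has (he' ▸ hb')) (fun he' => hbs (he' ▸ hb'))
                  (fun he' => hcs (he' ▸ hb')) (fun he' => hds (he' ▸ hb')))
              have hc' : c'.IsCycle := by
                rw [SimpleGraph.Walk.isCycle_def] at hcw ⊢
                refine ⟨?_, ?_, ?_⟩
                · rw [SimpleGraph.Walk.isTrail_def, hce']
                  exact hcw.1.edges_nodup
                · intro hnil
                  have h3 := SimpleGraph.Walk.IsCircuit.three_le_length (SimpleGraph.Walk.IsCycle.isCircuit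
                    (by rw [SimpleGraph.Walk.isCycle_def]; exact hcw))
                  rw [hnil] at hcl'
                  simp at hcl'
                  omega
                · rw [hcs']
                  exact hcw.2.2
              exact hC u c' hc' (by omega)
    have hnadj_bd : ¬ G'.Adj b d := by
      intro hh
      rcases (hadj_b d).mp hh with h' | h'
      · exact had h'.symm
      · exact hcd h'.symm
    refine ⟨hbd, ⟨a, (hadj_b a).mpr (Or.inl rfl)⟩, ⟨a, (hadj_d a).mpr (Or.inl rfl)⟩,
      hCnew, ?_⟩
    intro _ P hP hdvd
    obtain ⟨z1, hz1, t, htp, hbt, hsubt, hlent⟩ := first_decomp P hbd hP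
    rcases (hadj_b z1).mp hz1 with h1 | h1
    · subst h1
      obtain ⟨z2, hz2, t2, ht2p, hdt2, hsub2, hlen2⟩ := last_decomp t
        (fun hh => had hh.symm) htp
      rcases (hadj_d z2).mp hz2 with h2 | h2
      · subst h2
        have := loop_path_length ht2p
        omega
      · subst h2
        exact keyS_b t2 ht2p (fun hh => hbt (hsub2 _ hh)) (by omega)
    · subst h1
      obtain ⟨z2, hz2, t2, ht2p, hdt2, hsub2, hlen2⟩ := last_decomp t
        (fun hh => hcd hh.symm) htp
      rcases (hadj_d z2).mp hz2 with h2 | h2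
      · subst h2
        exact keyS_b t2.reverse ht2p.reverse
          (by rw [SimpleGraph.Walk.support_reverse, List.mem_reverse]
              exact fun hh => hbt (hsub2 _ hh))
          (by rw [SimpleGraph.Walk.length_reverse]; omega)
      · subst h2
        have := loop_path_length ht2p
        omega

end ExcProof

/-- Every exceptional graph contains no cycle whose length is divisible by 3. -/
theorem stmt_9 {V : Type*} (G : SimpleGraph V) (r x y : V)
    (hG : ExcAux G r x y) :
    ¬ ∃ (u : V) (c : G.Walk u u), c.IsCycle ∧ 3 ∣ c.length := by
  rintro ⟨u, c, hc, hdvd⟩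
  exact (ExcProof.excAux_inv hG).2.2.2.1 u c hc hdvd
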